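/- The pair statistics (des(π), |π|_{uh}) and (tr(π), |π|) are equidistributed over all plane partitions: Σ_π t^{des(π)} q^{|π|_{uh}} = ∏_{k≥1} (1 − t q^k)^{−k} = Σ_π t^{tr(π)} q^{|π|}. -/

import Mathlib

open scoped BigOperators

/-- A plane partition: a finitely supported `ℕ`-array (0-indexed) weakly
decreasing along rows and columns. -/
structure PlanePartition where
  entry : ℕ → ℕ → ℕ
  row_decr : ∀ i j, entry i (j + 1) ≤ entry i j
  col_decr : ∀ i j, entry (i + 1) j ≤ entry i j
  finite_support : {p : ℕ × ℕ | entry p.1 p.2 ≠ 0}.Finite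

namespace PlanePartition

/-- `π` has at most `n` (nonzero) rows. -/
def RowsLE (π : PlanePartition) (n : ℕ) : Prop := ∀ i j, n ≤ i → π.entry i j = 0

/-- `π` has at most `k` (nonzero) columns. -/
def ColsLE (π : PlanePartition) (k : ℕ) : Prop := ∀ i j, k ≤ j → π.entry i j = 0

/-- all entries of `π` are at most `m`. -/
def EntriesLE (π : PlanePartition) (m : ℕ) : Prop := ∀ i j, π.entry i j ≤ m

/-- The descent set of `π` (0-indexed cells). -/
def Des (π : PlanePartition) : Set (ℕ × ℕ) :=
  {p | π.entry (p.1 + 1) p.2 < π.entry p.1 p.2}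

/-- number of descents of `π`. -/
noncomputable def des (π : PlanePartition) : ℕ := π.Des.ncard

/-- `dmat π i ℓ` is the matrix entry `d_{i+1, ℓ+1}` of `Φ(π)`: the number of columns `j`
with `π_{ij} = ℓ+1 > π_{i+1,j}` (here `i`, `ℓ` are 0-indexed). -/
noncomputable def dmat (π : PlanePartition) (i ℓ : ℕ) : ℕ :=
  {j : ℕ | π.entry i j = ℓ + 1 ∧ π.entry (i + 1) j ≤ ℓ}.ncard

/-- the volume `|π|`. -/
noncomputable def vol (π : PlanePartition) : ℕ := ∑ᶠ p : ℕ × ℕ, π.entry p.1 p.2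

/-- the up-hook volume `|π|_{uh} = Σ_{(i,j) ∈ Des(π)} (π_{ij} + i - 1)` (1-indexed `i`;
in our 0-indexed convention the summand is `π.entry p.1 p.2 + p.1`). -/
noncomputable def uhvol (π : PlanePartition) : ℕ :=
  ∑ᶠ p ∈ π.Des, (π.entry p.1 p.2 + p.1)

/-- the corner volume `|π|_c = Σ_{(i,j) ∈ Des(π)} π_{ij}`. -/
noncomputable def cvol (π : PlanePartition) : ℕ :=
  ∑ᶠ p ∈ π.Des, π.entry p.1 p.2

/-- the trace `tr(π) = Σ_i π_{ii}`. -/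
noncomputable def trace (π : PlanePartition) : ℕ := ∑ᶠ i : ℕ, π.entry i i

/-- `colCount π v` is the number of columns of `π` containing the entry `v`. -/
noncomputable def colCount (π : PlanePartition) (v : ℕ) : ℕ :=
  {j : ℕ | ∃ i, π.entry i j = v}.ncard

/-- the length of row `i` (0-indexed) of `π`. -/
noncomputable def rowLen (π : PlanePartition) (i : ℕ) : ℕ :=
  {j : ℕ | π.entry i j ≠ 0}.ncard

/-- `π` is column-strict: entries strictly decrease down the columns (within the shape). -/
def ColStrict (π : PlanePartition) : Prop :=
  ∀ i j, π.entry i j ≠ 0 → π.entry (i + 1) j < π.entry i j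

/-- the shape of `π` is exactly the rectangle with `n` rows and `k` columns. -/
def ShapeRect (π : PlanePartition) (k n : ℕ) : Prop :=
  ∀ i j, π.entry i j ≠ 0 ↔ i < n ∧ j < k

end PlanePartition

/-- The Schur polynomial `s_{(k^n)}` of rectangular shape `(k^n)` in `N` variables
`x 0, …, x (N-1)`, defined via column-strict plane partitions of shape `(k^n)` with
entries at most `N`; the variable `x i` records entries equal to `i + 1`. -/
noncomputable def schurRect {R : Type*} [CommSemiring R] (k n N : ℕ) (x : ℕ → R) : R :=
  ∑ᶠ π ∈ {π : PlanePartition | π.ColStrict ∧ π.ShapeRect k n ∧ π.EntriesLE N},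
    ∏ i ∈ Finset.range N, x i ^ ({p : ℕ × ℕ | π.entry p.1 p.2 = i + 1}.ncard)

namespace PPwork

open PlanePartition

/-! ### Generic helpers -/

lemma le_of_lt_imp {a b : ℕ} (h : ∀ j, j < a → j < b) : a ≤ b := by
  by_contra h'
  push_neg at h'
  exact absurd (h b h') (lt_irrefl b)

lemma ncard_Iio (n : ℕ) : (Set.Iio n).ncard = n := by
  have : Set.Iio n = ↑(Finset.range n) := by ext x; simp
  rw [this, Set.ncard_coe_finset, Finset.card_range]

/-- A finite lower subset of `ℕ` is an initial segment. -/
lemma lowerSet_eq_Iio (S : Set ℕ) (hfin : S.Finite) (hlow : ∀ a b : ℕ, a ≤ b → b ∈ S → a ∈ S) :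
    S = Set.Iio S.ncard := by
  rcases S.eq_empty_or_nonempty with h | h
  · rw [h, Set.ncard_empty]
    ext x; simp
  · have hne : hfin.toFinset.Nonempty := by
      rwa [Set.Finite.toFinset_nonempty]
    set M := hfin.toFinset.max' hne with hM
    have hMS : M ∈ S := by
      have := hfin.toFinset.max'_mem hne
      rwa [Set.Finite.mem_toFinset] at this
    have hSeq : S = Set.Iio (M + 1) := by
      ext x
      constructor
      · intro hx
        have : x ≤ M := hfin.toFinset.le_max' x (by rwa [Set.Finite.mem_toFinset])
        exact Nat.lt_succ_of_le this
      · intro hx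
        exact hlow x M (Nat.lt_succ_iff.mp hx) hMS
    rw [hSeq, ncard_Iio]

lemma Iio_diff_ncard {a b : ℕ} (h : b ≤ a) : (Set.Iio a \ Set.Iio b).ncard = a - b := by
  have : Set.Iio a \ Set.Iio b = ↑(Finset.Ico b a) := by
    ext x
    simp only [Set.mem_diff, Set.mem_Iio, not_lt, Finset.coe_Ico, Set.mem_Ico]
    omega
  rw [this, Set.ncard_coe_finset, Nat.card_Ico]

/-! ### Basic plane partition lemmas -/

@[ext] lemma PP_ext {π σ : PlanePartition} (h : π.entry = σ.entry) : π = σ := by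
  cases π; cases σ; simpa using h

lemma entry_mono_row (π : PlanePartition) (i : ℕ) : Antitone (fun j => π.entry i j) :=
  antitone_nat_of_succ_le (fun j => π.row_decr i j)

lemma entry_mono_col (π : PlanePartition) (j : ℕ) : Antitone (fun i => π.entry i j) :=
  antitone_nat_of_succ_le (fun i => π.col_decr i j)

/-- Build a plane partition from a doubly-antitone function vanishing beyond a bound. -/
def mkPP (f : ℕ → ℕ → ℕ) (hr : ∀ i j, f i (j + 1) ≤ f i j) (hc : ∀ i j, f (i + 1) j ≤ f i j)
    (B : ℕ) (hB : ∀ i j, B ≤ i ∨ B ≤ j → f i j = 0) : PlanePartition where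
  entry := f
  row_decr := hr
  col_decr := hc
  finite_support := by
    apply Set.Finite.subset (Finset.finite_toSet (Finset.range B ×ˢ Finset.range B))
    intro p hp
    simp only [Set.mem_setOf_eq] at hp
    simp only [Finset.coe_product, Set.mem_prod, Finset.mem_coe, Finset.mem_range]
    constructor
    · by_contra h; exact hp (hB _ _ (Or.inl (not_lt.mp h)))
    · by_contra h; exact hp (hB _ _ (Or.inr (not_lt.mp h)))

@[simp] lemma mkPP_entry (f hr hc B hB) : (mkPP f hr hc B hB).entry = f := rfl

/-- a strong bound: both coordinates and values bounded by `B`. -/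
def IsBound (π : PlanePartition) (B : ℕ) : Prop :=
  0 < B ∧ (∀ i j, B ≤ i ∨ B ≤ j → π.entry i j = 0) ∧ (∀ i j, π.entry i j ≤ B)

lemma exists_bound (π : PlanePartition) : ∃ B : ℕ, IsBound π B := by
  classical
  set s := π.finite_support.toFinset with hs
  refine ⟨(s.sup fun p => max p.1 p.2) + 1 + π.entry 0 0, by omega, ?_, ?_⟩
  · intro i j hij
    by_contra h
    have hmem : (i, j) ∈ s := by
      rw [hs, Set.Finite.mem_toFinset]; exact h
    have := Finset.le_sup (f := fun p : ℕ × ℕ => max p.1 p.2) hmem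
    simp only [max_le_iff] at this
    omega
  · intro i j
    calc π.entry i j ≤ π.entry i 0 := entry_mono_row π i (Nat.zero_le j)
    _ ≤ π.entry 0 0 := entry_mono_col π 0 (Nat.zero_le i)
    _ ≤ _ := by omega

/-- The `j`-set counted by row `i`, level `v` is finite. -/
lemma rowSet_finite (π : PlanePartition) (i v : ℕ) : {j | v < π.entry i j}.Finite := by
  apply Set.Finite.subset (Set.Finite.preimage (f := fun j => (i, j))
    (Set.injOn_of_injective (fun a b hab => by simpa using hab)) π.finite_support)
  intro j hj
  simp only [Set.mem_setOf_eq] at hj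
  simp only [Set.mem_preimage, Set.mem_setOf_eq]
  omega

/-- Row-wise conjugate counting function. -/
noncomputable def G (π : PlanePartition) (i v : ℕ) : ℕ := {j | v < π.entry i j}.ncard

/-- fundamental equivalence for `G`. -/
lemma lt_G_iff (π : PlanePartition) {i v j : ℕ} : j < G π i v ↔ v < π.entry i j := by
  have h := lowerSet_eq_Iio {j | v < π.entry i j} (rowSet_finite π i v)
    (fun a b hab hb => lt_of_lt_of_le hb (entry_mono_row π i hab))
  have := Set.ext_iff.mp h j
  simp only [Set.mem_setOf_eq, Set.mem_Iio] at this
  exact ⟨fun hj => this.mpr hj, fun hj => this.mp hj⟩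

lemma G_row_decr (π : PlanePartition) (i v : ℕ) : G π i (v + 1) ≤ G π i v := by
  apply le_of_lt_imp
  intro j hj
  rw [lt_G_iff] at hj ⊢
  omega

lemma G_col_decr (π : PlanePartition) (i v : ℕ) : G π (i + 1) v ≤ G π i v := by
  apply le_of_lt_imp
  intro j hj
  rw [lt_G_iff] at hj ⊢
  exact lt_of_lt_of_le hj (π.col_decr i j)

lemma G_bound (π : PlanePartition) {B : ℕ} (hB : IsBound π B)
    (i v : ℕ) (h : B ≤ i ∨ B ≤ v) : G π i v = 0 := by
  obtain ⟨hB0, hBsupp, hBval⟩ := hB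
  by_contra h0
  have h1 : 0 < G π i v := Nat.pos_of_ne_zero h0
  rw [lt_G_iff] at h1
  rcases h with h | h
  · rw [hBsupp i 0 (Or.inl h)] at h1; omega
  · have := hBval i 0; omega

/-- row-wise conjugation as a plane partition -/
noncomputable def rowConj (π : PlanePartition) : PlanePartition :=
  mkPP (G π) (G_row_decr π) (G_col_decr π) (exists_bound π).choose
    (G_bound π (exists_bound π).choose_spec)

@[simp] lemma rowConj_entry (π : PlanePartition) : (rowConj π).entry = G π := rfl

lemma rowConj_rowConj (π : PlanePartition) : rowConj (rowConj π) = π := by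
  ext i j
  show G (rowConj π) i j = π.entry i j
  have key : ∀ v, v < G (rowConj π) i j ↔ v < π.entry i j := by
    intro v
    rw [lt_G_iff]
    show j < G π i v ↔ _
    rw [lt_G_iff]
  have h1 := key (G (rowConj π) i j)
  have h2 := key (π.entry i j)
  omega



/-! ### generic south-east induction principle -/

lemma se_ind (C : ℕ) (P : ℕ → ℕ → Prop) (h0 : ∀ x y, C ≤ x + y → P x y)
    (h1 : ∀ x y, x + y < C → P (x + 1) y → P x (y + 1) → P (x + 1) (y + 1) → P x y) :
    ∀ x y, P x y := by
  suffices h : ∀ n x y, C ≤ n + x + y → P x y from fun x y => h C x y (by omega)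
  intro n
  induction n with
  | zero => intro x y h; exact h0 x y (by omega)
  | succ n ih =>
    intro x y h
    by_cases hc : C ≤ x + y
    · exact h0 _ _ hc
    · push_neg at hc
      exact h1 x y hc (ih _ _ (by omega)) (ih _ _ (by omega)) (ih _ _ (by omega))

/-! ### Part A: the fueled max-recursion -/

def seA (m : ℕ → ℕ → ℕ) : ℕ → ℕ → ℕ → ℕ
  | 0, _, _ => 0
  | f + 1, i, v => m i v + max (seA m f i (v + 1)) (seA m f (i + 1) v)

variable {m : ℕ → ℕ → ℕ} {B : ℕ}

lemma seA_vanish (hm : ∀ i v, B ≤ i ∨ B ≤ v → m i v = 0) :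
    ∀ f i v, (B ≤ i ∨ B ≤ v) → seA m f i v = 0 := by
  intro f
  induction f with
  | zero => intro i v _; rfl
  | succ f ih =>
    intro i v h
    show m i v + max (seA m f i (v + 1)) (seA m f (i + 1) v) = 0
    rw [hm i v h, ih i (v + 1) (by omega), ih (i + 1) v (by omega)]
    rfl

lemma seA_stab (hm : ∀ i v, B ≤ i ∨ B ≤ v → m i v = 0) :
    ∀ f i v, 2 * B ≤ f + i + v → seA m (f + 1) i v = seA m f i v := by
  intro f
  induction f with
  | zero =>
    intro i v h
    rw [seA_vanish hm 1 i v (by omega), seA_vanish hm 0 i v (by omega)]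
  | succ f ih =>
    intro i v h
    show m i v + _ = m i v + _
    rw [ih i (v + 1) (by omega), ih (i + 1) v (by omega)]

lemma seA_stab' (hm : ∀ i v, B ≤ i ∨ B ≤ v → m i v = 0) :
    ∀ g f i v, 2 * B ≤ f + i + v → seA m (f + g) i v = seA m f i v := by
  intro g
  induction g with
  | zero => intro f i v _; rfl
  | succ g ih =>
    intro f i v h
    have : f + (g + 1) = (f + g) + 1 := by omega
    rw [this, seA_stab hm (f + g) i v (by omega), ih f i v h]

/-- the inverse of Φ at the level of the conjugate array. -/
def invA (m : ℕ → ℕ → ℕ) (B : ℕ) : ℕ → ℕ → ℕ := fun i v => seA m (2 * B) i v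

lemma invA_rec (hm : ∀ i v, B ≤ i ∨ B ≤ v → m i v = 0) (i v : ℕ) :
    invA m B i v = m i v + max (invA m B i (v + 1)) (invA m B (i + 1) v) := by
  have h1 : invA m B i v = seA m (2 * B + 1) i v := by
    show seA m (2 * B) i v = _
    rw [seA_stab hm (2 * B) i v (by omega)]
  rw [h1]
  rfl

lemma invA_vanish (hm : ∀ i v, B ≤ i ∨ B ≤ v → m i v = 0) (i v : ℕ)
    (h : B ≤ i ∨ B ≤ v) : invA m B i v = 0 := seA_vanish hm _ i v h

lemma invA_row_decr (hm : ∀ i v, B ≤ i ∨ B ≤ v → m i v = 0) (i v : ℕ) :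
    invA m B i (v + 1) ≤ invA m B i v := by
  rw [invA_rec hm i v]; omega

lemma invA_col_decr (hm : ∀ i v, B ≤ i ∨ B ≤ v → m i v = 0) (i v : ℕ) :
    invA m B (i + 1) v ≤ invA m B i v := by
  rw [invA_rec hm i v]; omega

/-- uniqueness of solutions of the max-recursion with vanishing -/
lemma recA_unique {P Q : ℕ → ℕ → ℕ} {C : ℕ}
    (hP : ∀ i v, P i v = m i v + max (P i (v + 1)) (P (i + 1) v))
    (hQ : ∀ i v, Q i v = m i v + max (Q i (v + 1)) (Q (i + 1) v))
    (hPv : ∀ i v, C ≤ i + v → P i v = 0) (hQv : ∀ i v, C ≤ i + v → Q i v = 0) :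
    ∀ i v, P i v = Q i v := by
  apply se_ind C
  · intro x y h; rw [hPv x y h, hQv x y h]
  · intro x y _ h1 h2 _
    rw [hP x y, hQ x y, h1, h2]

/-! ### `dmat` as a difference of `G`'s -/

lemma dmat_eq (π : PlanePartition) (i ℓ : ℕ) :
    dmat π i ℓ + max (G π i (ℓ + 1)) (G π (i + 1) ℓ) = G π i ℓ := by
  have hmax : max (G π i (ℓ + 1)) (G π (i + 1) ℓ) ≤ G π i ℓ :=
    max_le (G_row_decr π i ℓ) (G_col_decr π i ℓ)
  have hset : {j : ℕ | π.entry i j = ℓ + 1 ∧ π.entry (i + 1) j ≤ ℓ}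
      = Set.Iio (G π i ℓ) \ Set.Iio (max (G π i (ℓ + 1)) (G π (i + 1) ℓ)) := by
    ext j
    have a := lt_G_iff π (i := i) (v := ℓ) (j := j)
    have b := lt_G_iff π (i := i) (v := ℓ + 1) (j := j)
    have c := lt_G_iff π (i := i + 1) (v := ℓ) (j := j)
    simp only [Set.mem_setOf_eq, Set.mem_diff, Set.mem_Iio, lt_max_iff, not_or, not_lt]
    constructor
    · rintro ⟨h1, h2⟩
      refine ⟨a.mpr (by omega), ?_, ?_⟩
      · exact not_lt.mp (fun hb => by have := b.mp hb; omega)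
      · exact not_lt.mp (fun hc => by have := c.mp hc; omega)
    · rintro ⟨h1, h2, h3⟩
      have ha := a.mp h1
      have hb : ¬(ℓ + 1 < π.entry i j) := fun h => absurd (b.mpr h) (not_lt.mpr h2)
      have hc : ¬(ℓ < π.entry (i + 1) j) := fun h => absurd (c.mpr h) (not_lt.mpr h3)
      omega
  have : dmat π i ℓ = G π i ℓ - max (G π i (ℓ + 1)) (G π (i + 1) ℓ) := by
    rw [dmat, hset, Iio_diff_ncard hmax]
  omega

lemma G_rec (π : PlanePartition) (i v : ℕ) :
    G π i v = dmat π i v + max (G π i (v + 1)) (G π (i + 1) v) := (dmat_eq π i v).symm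

lemma dmat_finite_support (π : PlanePartition) :
    (Function.support fun p : ℕ × ℕ => dmat π p.1 p.2).Finite := by
  apply Set.Finite.subset (rowConj π).finite_support
  intro p hp
  simp only [Function.mem_support] at hp
  simp only [Set.mem_setOf_eq, rowConj_entry]
  have := dmat_eq π p.1 p.2
  omega

/-- Φ as a finsupp -/
noncomputable def PhiA (π : PlanePartition) : (ℕ × ℕ) →₀ ℕ :=
  Finsupp.ofSupportFinite (fun p => dmat π p.1 p.2) (dmat_finite_support π)

@[simp] lemma PhiA_apply (π : PlanePartition) (p : ℕ × ℕ) : PhiA π p = dmat π p.1 p.2 := rfl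

/-- bound for a finsupp matrix -/
noncomputable def mbound (m : (ℕ × ℕ) →₀ ℕ) : ℕ := (m.support.sup fun p => max p.1 p.2) + 1

lemma mbound_spec (m : (ℕ × ℕ) →₀ ℕ) :
    ∀ i v, mbound m ≤ i ∨ mbound m ≤ v → m (i, v) = 0 := by
  intro i v h
  by_contra hc
  have hmem : (i, v) ∈ m.support := Finsupp.mem_support_iff.mpr hc
  have := Finset.le_sup (f := fun p : ℕ × ℕ => max p.1 p.2) hmem
  simp only [max_le_iff] at this
  unfold mbound at h
  omega

/-- inverse of Φ -/
noncomputable def PsiA (m : (ℕ × ℕ) →₀ ℕ) : PlanePartition :=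
  rowConj (mkPP (invA (fun i v => m (i, v)) (mbound m))
    (invA_row_decr (mbound_spec m)) (invA_col_decr (mbound_spec m))
    (mbound m) (fun i v h => invA_vanish (mbound_spec m) i v h))



lemma PsiA_PhiA (π : PlanePartition) : PsiA (PhiA π) = π := by
  set m := PhiA π
  set Bm := mbound m
  -- the invA built from dmat π agrees with G π
  have hGrec : ∀ i v, G π i v = m (i, v) + max (G π i (v + 1)) (G π (i + 1) v) := by
    intro i v
    exact G_rec π i v
  have hInvRec : ∀ i v, invA (fun i v => m (i, v)) Bm i v
      = m (i, v) + max (invA (fun i v => m (i, v)) Bm i (v + 1))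
        (invA (fun i v => m (i, v)) Bm (i + 1) v) :=
    fun i v => invA_rec (mbound_spec m) i v
  obtain ⟨Bp, hBp⟩ := exists_bound π
  have hkey : ∀ i v, invA (fun i v => m (i, v)) Bm i v = G π i v := by
    apply recA_unique (C := 2 * (Bm + Bp)) hInvRec hGrec
    · intro i v h
      exact invA_vanish (mbound_spec m) i v (by omega)
    · exact fun i v h => G_bound π hBp i v (by omega)
  have : mkPP (invA (fun i v => m (i, v)) Bm)
      (invA_row_decr (mbound_spec m)) (invA_col_decr (mbound_spec m))
      Bm (fun i v h => invA_vanish (mbound_spec m) i v h) = rowConj π := by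
    ext i v
    show invA (fun i v => m (i, v)) Bm i v = G π i v
    exact hkey i v
  show rowConj _ = π
  rw [this, rowConj_rowConj]

lemma PhiA_PsiA (m : (ℕ × ℕ) →₀ ℕ) : PhiA (PsiA m) = m := by
  set τ := mkPP (invA (fun i v => m (i, v)) (mbound m))
    (invA_row_decr (mbound_spec m)) (invA_col_decr (mbound_spec m))
    (mbound m) (fun i v h => invA_vanish (mbound_spec m) i v h) with hτ
  have hPsi : PsiA m = rowConj τ := rfl
  have hG : ∀ i v, G (PsiA m) i v = invA (fun i v => m (i, v)) (mbound m) i v := by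
    intro i v
    have h1 : (rowConj (rowConj τ)).entry = τ.entry :=
      congrArg PlanePartition.entry (rowConj_rowConj τ)
    have h2 : (rowConj (rowConj τ)).entry = G (rowConj τ) := rfl
    rw [hPsi]
    show G (rowConj τ) i v = _
    rw [← h2, h1]
    rfl
  ext p
  obtain ⟨i, ℓ⟩ := p
  have h1 := dmat_eq (PsiA m) i ℓ
  have h2 := invA_rec (mbound_spec m) i ℓ
  rw [hG, hG, hG] at h1
  show dmat (PsiA m) i ℓ = m (i, ℓ)
  omega

/-- The Φ equivalence (part A). -/
noncomputable def equivA : PlanePartition ≃ ((ℕ × ℕ) →₀ ℕ) where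
  toFun := PhiA
  invFun := PsiA
  left_inv := PsiA_PhiA
  right_inv := PhiA_PsiA


/-! ### Part A statistics -/

noncomputable def msum (m : (ℕ × ℕ) →₀ ℕ) : ℕ := m.sum fun _ v => v
noncomputable def wsum (m : (ℕ × ℕ) →₀ ℕ) : ℕ := m.sum fun p v => v * (p.1 + p.2 + 1)

lemma Des_finite (π : PlanePartition) : π.Des.Finite := by
  apply Set.Finite.subset π.finite_support
  intro p hp
  simp only [Des, Set.mem_setOf_eq] at hp
  simp only [Set.mem_setOf_eq]
  omega

lemma dset_finite (π : PlanePartition) (i ℓ : ℕ) :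
    {j : ℕ | π.entry i j = ℓ + 1 ∧ π.entry (i + 1) j ≤ ℓ}.Finite := by
  apply Set.Finite.subset (rowSet_finite π i ℓ)
  intro j hj
  simp only [Set.mem_setOf_eq] at hj ⊢
  omega

noncomputable def Dfin (π : PlanePartition) (i ℓ : ℕ) : Finset ℕ := (dset_finite π i ℓ).toFinset

lemma Dfin_card (π : PlanePartition) (i ℓ : ℕ) : (Dfin π i ℓ).card = dmat π i ℓ :=
  (Set.ncard_eq_toFinset_card _ _).symm

noncomputable def desT (π : PlanePartition) : Finset (ℕ × ℕ) := (Des_finite π).toFinset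

def phiMap (π : PlanePartition) (p : ℕ × ℕ) : ℕ × ℕ := (p.1, π.entry p.1 p.2 - 1)

lemma fiber_eq (π : PlanePartition) (i ℓ : ℕ) :
    (desT π).filter (fun p => phiMap π p = (i, ℓ))
      = (Dfin π i ℓ).map ⟨fun j => (i, j), fun a b hab => by simpa using hab⟩ := by
  ext p
  obtain ⟨pi, pj⟩ := p
  simp only [Finset.mem_filter, desT, Set.Finite.mem_toFinset, Finset.mem_map,
    Function.Embedding.coeFn_mk, Dfin, Set.Finite.mem_toFinset, Set.mem_setOf_eq,
    Des, phiMap, Prod.mk.injEq]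
  constructor
  · rintro ⟨hdes, h1, h2⟩
    subst h1
    exact ⟨pj, ⟨by omega, by omega⟩, rfl⟩
  · rintro ⟨j, ⟨hj1, hj2⟩, hj⟩
    obtain ⟨hj3, hj4⟩ := Prod.mk.inj (hj : (i, j) = (pi, pj))
    subst hj3
    subst hj4
    refine ⟨by omega, rfl, by omega⟩

lemma mem_supp_of_fiber (π : PlanePartition) (p : ℕ × ℕ) (hp : p ∈ desT π) :
    phiMap π p ∈ (PhiA π).support := by
  rw [Finsupp.mem_support_iff]
  show dmat π (phiMap π p).1 (phiMap π p).2 ≠ 0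
  have hp' : p ∈ (desT π).filter (fun q => phiMap π q = phiMap π p) := by
    simp [Finset.mem_filter, hp]
  rw [fiber_eq π (phiMap π p).1 (phiMap π p).2] at hp'
  have : 0 < ((Dfin π (phiMap π p).1 (phiMap π p).2).map
      ⟨fun j => ((phiMap π p).1, j), fun a b hab => by simpa using hab⟩).card :=
    Finset.card_pos.mpr ⟨p, hp'⟩
  rw [Finset.card_map, Dfin_card] at this
  omega

lemma des_eq_msum (π : PlanePartition) : π.des = msum (PhiA π) := by
  classical
  have h1 : π.des = (desT π).card := Set.ncard_eq_toFinset_card _ _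
  rw [h1, Finset.card_eq_sum_card_fiberwise (mem_supp_of_fiber π)]
  unfold msum Finsupp.sum
  apply Finset.sum_congr rfl
  intro b _
  rw [fiber_eq π b.1 b.2, Finset.card_map, Dfin_card]
  rfl

lemma uhvol_eq_wsum (π : PlanePartition) : π.uhvol = wsum (PhiA π) := by
  classical
  have h0 : π.Des = ↑(desT π) := (Set.Finite.coe_toFinset _).symm
  have h1 : π.uhvol = ∑ p ∈ desT π, (π.entry p.1 p.2 + p.1) := by
    rw [uhvol, h0, finsum_mem_coe_finset]
  rw [h1, ← Finset.sum_fiberwise_of_maps_to (mem_supp_of_fiber π)]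
  unfold wsum Finsupp.sum
  apply Finset.sum_congr rfl
  intro b _
  rw [fiber_eq π b.1 b.2, Finset.sum_map]
  have : ∀ j ∈ Dfin π b.1 b.2,
      π.entry ((⟨fun j => (b.1, j), fun a c hac => by simpa using hac⟩ :
        ℕ ↪ ℕ × ℕ) j).1 ((⟨fun j => (b.1, j), fun a c hac => by simpa using hac⟩ :
        ℕ ↪ ℕ × ℕ) j).2 + ((⟨fun j => (b.1, j), fun a c hac => by simpa using hac⟩ :
        ℕ ↪ ℕ × ℕ) j).1 = b.2 + 1 + b.1 := by
    intro j hj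
    show π.entry b.1 j + b.1 = b.2 + 1 + b.1
    have hj' : π.entry b.1 j = b.2 + 1 := by
      have := (Set.Finite.mem_toFinset _).mp hj
      exact this.1
    omega
  rw [Finset.sum_congr rfl this, Finset.sum_const, Dfin_card, smul_eq_mul]
  show dmat π b.1 b.2 * (b.2 + 1 + b.1) = PhiA π b * (b.1 + b.2 + 1)
  rw [PhiA_apply]
  ring


/-! ### Part B: growth diagram local rules -/

/-- forward local rule -/
def locF (mu l1 l2 : ℕ → ℕ) (c : ℕ) : ℕ → ℕ
  | 0 => max (l1 0) (l2 0) + c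
  | k + 1 => max (l1 (k + 1)) (l2 (k + 1)) + (min (l1 k) (l2 k) - mu k)

/-- backward local rule -/
def locG (l1 l2 nu : ℕ → ℕ) : ℕ → ℕ := fun k =>
  min (l1 k) (l2 k) + max (l1 (k + 1)) (l2 (k + 1)) - nu (k + 1)

/-- `HS a b` : `a ⊆ b` and `b/a` is a horizontal strip. -/
def HS (a b : ℕ → ℕ) : Prop := ∀ k, a k ≤ b k ∧ b (k + 1) ≤ a k

lemma HS_zero : HS (fun _ => 0) (fun _ => 0) := fun k => ⟨le_refl _, le_refl _⟩

lemma locF_comm (mu l1 l2 : ℕ → ℕ) (c : ℕ) : locF mu l1 l2 c = locF mu l2 l1 c := by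
  funext k
  cases k with
  | zero => show max _ _ + c = max _ _ + c; rw [max_comm]
  | succ k => show max _ _ + (min _ _ - _) = max _ _ + (min _ _ - _); rw [max_comm, min_comm]

lemma locG_comm (l1 l2 nu : ℕ → ℕ) : locG l1 l2 nu = locG l2 l1 nu := by
  funext k
  show min _ _ + max _ _ - _ = min _ _ + max _ _ - _
  rw [max_comm, min_comm]

lemma locF_HS1 {mu l1 l2 : ℕ → ℕ} {c : ℕ} (h1 : HS mu l1) (h2 : HS mu l2) :
    HS l1 (locF mu l1 l2 c) := by
  intro k
  cases k with
  | zero =>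
    obtain ⟨ha0, hb0⟩ := h1 0
    obtain ⟨hc0, hd0⟩ := h2 0
    constructor
    · show l1 0 ≤ max (l1 0) (l2 0) + c
      omega
    · show max (l1 (0 + 1)) (l2 (0 + 1)) + (min (l1 0) (l2 0) - mu 0) ≤ l1 0
      omega
  | succ k =>
    obtain ⟨ha, hb⟩ := h1 (k + 1)
    obtain ⟨hc, hd⟩ := h2 (k + 1)
    obtain ⟨ha', hb'⟩ := h1 k
    obtain ⟨hc', hd'⟩ := h2 k
    constructor
    · show l1 (k + 1) ≤ max (l1 (k + 1)) (l2 (k + 1)) + _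
      omega
    · show max (l1 (k + 1 + 1)) (l2 (k + 1 + 1)) + (min (l1 (k + 1)) (l2 (k + 1)) - mu (k + 1))
        ≤ l1 (k + 1)
      omega

lemma locF_HS2 {mu l1 l2 : ℕ → ℕ} {c : ℕ} (h1 : HS mu l1) (h2 : HS mu l2) :
    HS l2 (locF mu l1 l2 c) := by
  rw [locF_comm]
  exact locF_HS1 h2 h1

lemma locG_HS1 {l1 l2 nu : ℕ → ℕ} (h1 : HS l1 nu) (h2 : HS l2 nu) :
    HS (locG l1 l2 nu) l1 := by
  intro k
  obtain ⟨ha, hb⟩ := h1 k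
  obtain ⟨hc, hd⟩ := h2 k
  obtain ⟨ha', hb'⟩ := h1 (k + 1)
  obtain ⟨hc', hd'⟩ := h2 (k + 1)
  constructor
  · show min (l1 k) (l2 k) + max (l1 (k + 1)) (l2 (k + 1)) - nu (k + 1) ≤ l1 k
    omega
  · show l1 (k + 1) ≤ min (l1 k) (l2 k) + max (l1 (k + 1)) (l2 (k + 1)) - nu (k + 1)
    omega

lemma locG_HS2 {l1 l2 nu : ℕ → ℕ} (h1 : HS l1 nu) (h2 : HS l2 nu) :
    HS (locG l1 l2 nu) l2 := by
  rw [locG_comm]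
  exact locG_HS1 h2 h1

lemma locG_locF {mu l1 l2 : ℕ → ℕ} {c : ℕ} (h1 : HS mu l1) (h2 : HS mu l2) :
    locG l1 l2 (locF mu l1 l2 c) = mu := by
  funext k
  obtain ⟨ha, hb⟩ := h1 k
  obtain ⟨hc, hd⟩ := h2 k
  obtain ⟨ha', hb'⟩ := h1 (k + 1)
  obtain ⟨hc', hd'⟩ := h2 (k + 1)
  show min (l1 k) (l2 k) + max (l1 (k + 1)) (l2 (k + 1))
      - (max (l1 (k + 1)) (l2 (k + 1)) + (min (l1 k) (l2 k) - mu k)) = mu k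
  omega

lemma locF_locG {l1 l2 nu : ℕ → ℕ} (h1 : HS l1 nu) (h2 : HS l2 nu) :
    locF (locG l1 l2 nu) l1 l2 (nu 0 - max (l1 0) (l2 0)) = nu := by
  funext k
  cases k with
  | zero =>
    obtain ⟨ha, hb⟩ := h1 0
    obtain ⟨hc, hd⟩ := h2 0
    show max (l1 0) (l2 0) + (nu 0 - max (l1 0) (l2 0)) = nu 0
    omega
  | succ k =>
    obtain ⟨ha, hb⟩ := h1 k
    obtain ⟨hc, hd⟩ := h2 k
    obtain ⟨ha', hb'⟩ := h1 (k + 1)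
    obtain ⟨hc', hd'⟩ := h2 (k + 1)
    show max (l1 (k + 1)) (l2 (k + 1))
        + (min (l1 k) (l2 k) - (min (l1 k) (l2 k) + max (l1 (k + 1)) (l2 (k + 1)) - nu (k + 1)))
        = nu (k + 1)
    omega

lemma locF_zero : locF (fun _ => 0) (fun _ => 0) (fun _ => 0) 0 = fun _ => 0 := by
  funext k
  cases k with
  | zero => rfl
  | succ k => rfl


/-! ### the growth diagram, built from the south-east -/

def seB (m : ℕ → ℕ → ℕ) : ℕ → ℕ → ℕ → (ℕ → ℕ)
  | 0, _, _ => fun _ => 0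
  | f + 1, x, y => locF (seB m f (x + 1) (y + 1)) (seB m f (x + 1) y) (seB m f x (y + 1)) (m x y)

section GrowB

variable {m : ℕ → ℕ → ℕ} {B : ℕ}

lemma seB_vanish (hm : ∀ x y, B ≤ x ∨ B ≤ y → m x y = 0) :
    ∀ f x y, (B ≤ x ∨ B ≤ y) → seB m f x y = fun _ => 0 := by
  intro f
  induction f with
  | zero => intro x y _; rfl
  | succ f ih =>
    intro x y h
    show locF _ _ _ _ = _
    rw [ih (x + 1) (y + 1) (by omega), ih (x + 1) y (by omega), ih x (y + 1) (by omega),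
      hm x y h, locF_zero]

lemma seB_stab (hm : ∀ x y, B ≤ x ∨ B ≤ y → m x y = 0) :
    ∀ f x y, 2 * B ≤ f + x + y → seB m (f + 1) x y = seB m f x y := by
  intro f
  induction f with
  | zero =>
    intro x y h
    rw [seB_vanish hm 1 x y (by omega), seB_vanish hm 0 x y (by omega)]
  | succ f ih =>
    intro x y h
    show locF _ _ _ _ = locF _ _ _ _
    rw [ih (x + 1) (y + 1) (by omega), ih (x + 1) y (by omega), ih x (y + 1) (by omega)]

lemma seB_stab' (hm : ∀ x y, B ≤ x ∨ B ≤ y → m x y = 0) :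
    ∀ g f x y, 2 * B ≤ f + x + y → seB m (f + g) x y = seB m f x y := by
  intro g
  induction g with
  | zero => intro f x y _; rfl
  | succ g ih =>
    intro f x y h
    have he : f + (g + 1) = (f + g) + 1 := by omega
    rw [he, seB_stab hm (f + g) x y (by omega), ih f x y h]

/-- the growth diagram -/
def gro (m : ℕ → ℕ → ℕ) (B : ℕ) : ℕ → ℕ → (ℕ → ℕ) := fun x y => seB m (2 * B) x y

lemma gro_rec (hm : ∀ x y, B ≤ x ∨ B ≤ y → m x y = 0) (x y : ℕ) :
    gro m B x y = locF (gro m B (x + 1) (y + 1)) (gro m B (x + 1) y) (gro m B x (y + 1))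
      (m x y) := by
  have h1 : gro m B x y = seB m (2 * B + 1) x y := by
    show seB m (2 * B) x y = _
    rw [seB_stab hm (2 * B) x y (by omega)]
  rw [h1]
  rfl

lemma gro_vanish (hm : ∀ x y, B ≤ x ∨ B ≤ y → m x y = 0) (x y : ℕ)
    (h : B ≤ x ∨ B ≤ y) : gro m B x y = fun _ => 0 := seB_vanish hm _ x y h

/-- all edges of the growth diagram are horizontal strips -/
lemma gro_HS (hm : ∀ x y, B ≤ x ∨ B ≤ y → m x y = 0) :
    ∀ x y, HS (gro m B (x + 1) y) (gro m B x y) ∧ HS (gro m B x (y + 1)) (gro m B x y) := by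
  apply se_ind (2 * B)
  · intro x y h
    rw [gro_vanish hm x y (by omega), gro_vanish hm (x + 1) y (by omega),
      gro_vanish hm x (y + 1) (by omega)]
    exact ⟨HS_zero, HS_zero⟩
  · intro x y _ ih1 ih2 _
    rw [gro_rec hm x y]
    exact ⟨locF_HS1 ih1.2 ih2.1, locF_HS2 ih1.2 ih2.1⟩

/-- parts vanish beyond the antidiagonal -/
lemma gro_parts_vanish (hm : ∀ x y, B ≤ x ∨ B ≤ y → m x y = 0) :
    ∀ x y k, 2 * B ≤ x + y + k → gro m B x y k = 0 := by
  have key : ∀ x y, ∀ k, 2 * B ≤ x + y + k → gro m B x y k = 0 := by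
    apply se_ind (C := 2 * B) (P := fun x y => ∀ k, 2 * B ≤ x + y + k → gro m B x y k = 0)
    · intro x y h k _
      rw [gro_vanish hm x y (by omega)]
    · intro x y hlt ih1 ih2 _ k hk
      match k, hk with
      | 0, hk => omega
      | k + 1, hk =>
        rw [gro_rec hm x y]
        show max (gro m B (x + 1) y (k + 1)) (gro m B x (y + 1) (k + 1))
          + (min (gro m B (x + 1) y k) (gro m B x (y + 1) k) - _) = 0
        rw [ih1 (k + 1) (by omega), ih2 (k + 1) (by omega), ih1 k (by omega),
          ih2 k (by omega)]
        simp
  exact key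

end GrowB


section PPB

variable {m : ℕ → ℕ → ℕ} {B : ℕ}

/-- the plane partition extracted from the growth diagram via its diagonals -/
def entB (m : ℕ → ℕ → ℕ) (B : ℕ) : ℕ → ℕ → ℕ := fun i j =>
  if i ≤ j then gro m B 0 (j - i) i else gro m B (i - j) 0 j

lemma entB_row_decr (hm : ∀ x y, B ≤ x ∨ B ≤ y → m x y = 0) (i j : ℕ) :
    entB m B i (j + 1) ≤ entB m B i j := by
  unfold entB
  rcases Nat.lt_trichotomy i (j + 1) with h | h | h
  · have h1 : i ≤ j + 1 := by omega
    have h2 : i ≤ j := by omega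
    rw [if_pos h1, if_pos h2]
    have h3 : j + 1 - i = (j - i) + 1 := by omega
    rw [h3]
    exact ((gro_HS hm 0 (j - i)).2 i).1
  · subst h
    have h1 : j + 1 ≤ j + 1 := le_refl _
    have h2 : ¬ (j + 1 ≤ j) := by omega
    rw [if_pos h1, if_neg h2]
    have h5 : j + 1 - (j + 1) = 0 := by omega
    have h6 : j + 1 - j = 1 := by omega
    rw [h5, h6]
    show gro m B 0 0 (j + 1) ≤ gro m B 1 0 j
    have := ((gro_HS hm 0 0).1 j).2
    exact this
  · have h1 : ¬ (i ≤ j + 1) := by omega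
    have h2 : ¬ (i ≤ j) := by omega
    rw [if_neg h1, if_neg h2]
    have h3 : i - j = (i - (j + 1)) + 1 := by omega
    rw [h3]
    exact ((gro_HS hm (i - (j + 1)) 0).1 j).2

lemma entB_col_decr (hm : ∀ x y, B ≤ x ∨ B ≤ y → m x y = 0) (i j : ℕ) :
    entB m B (i + 1) j ≤ entB m B i j := by
  unfold entB
  rcases Nat.lt_trichotomy j (i + 1) with h | h | h
  · have h1 : ¬ (i + 1 ≤ j) := by omega
    rw [if_neg h1]
    by_cases h2 : j = i
    · subst h2
      rw [if_pos (le_refl j)]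
      have h5 : j + 1 - j = 1 := by omega
      have h6 : j - j = 0 := by omega
      rw [h5, h6]
      have := ((gro_HS hm 0 0).1 j).1
      exact this
    · have h3 : ¬ (i ≤ j) := by omega
      rw [if_neg h3]
      have h4 : i + 1 - j = (i - j) + 1 := by omega
      rw [h4]
      exact ((gro_HS hm (i - j) 0).1 j).1
  · have h1 : i + 1 ≤ j := by omega
    have h2 : i ≤ j := by omega
    rw [if_pos h1, if_pos h2]
    subst h
    have h5 : i + 1 - (i + 1) = 0 := by omega
    have h6 : i + 1 - i = 1 := by omega
    rw [h5, h6]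
    have := ((gro_HS hm 0 0).2 i).2
    exact this
  · have h1 : i + 1 ≤ j := by omega
    have h2 : i ≤ j := by omega
    rw [if_pos h1, if_pos h2]
    have h3 : j - i = (j - (i + 1)) + 1 := by omega
    rw [h3]
    exact ((gro_HS hm 0 (j - (i + 1))).2 i).2

lemma entB_bound (hm : ∀ x y, B ≤ x ∨ B ≤ y → m x y = 0) (i j : ℕ)
    (h : 2 * B ≤ i ∨ 2 * B ≤ j) : entB m B i j = 0 := by
  unfold entB
  by_cases h1 : i ≤ j
  · rw [if_pos h1]
    exact gro_parts_vanish hm 0 (j - i) i (by omega)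
  · rw [if_neg h1]
    exact gro_parts_vanish hm (i - j) 0 j (by omega)

/-- the plane partition associated to a matrix -/
def ppOf (m : ℕ → ℕ → ℕ) (B : ℕ) (hm : ∀ x y, B ≤ x ∨ B ≤ y → m x y = 0) : PlanePartition :=
  mkPP (entB m B) (entB_row_decr hm) (entB_col_decr hm) (2 * B) (entB_bound hm)

end PPB


/-! ### sizes in the growth diagram -/

lemma locF_size {mu l1 l2 : ℕ → ℕ} {c N : ℕ}
    (h1 : HS mu l1) (h2 : HS mu l2)
    (hv1 : l1 N = 0) (hv2 : l2 N = 0) (hvmu : mu N = 0) :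
    ∑ k ∈ Finset.range (N + 1), locF mu l1 l2 c k + ∑ k ∈ Finset.range (N + 1), mu k
      = ∑ k ∈ Finset.range (N + 1), l1 k + ∑ k ∈ Finset.range (N + 1), l2 k + c := by
  set nu := locF mu l1 l2 c with hnu
  have e1 : ∑ k ∈ Finset.range (N + 1), nu k
      = ∑ k ∈ Finset.range N, nu (k + 1) + nu 0 := Finset.sum_range_succ' nu N
  have e2 : ∑ k ∈ Finset.range (N + 1), mu k = ∑ k ∈ Finset.range N, mu k + mu N :=
    Finset.sum_range_succ mu N
  have e3 : ∑ k ∈ Finset.range N, nu (k + 1) + ∑ k ∈ Finset.range N, mu k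
      = ∑ k ∈ Finset.range N, (fun k => max (l1 (k + 1)) (l2 (k + 1)) + min (l1 k) (l2 k)) k := by
    rw [← Finset.sum_add_distrib]
    apply Finset.sum_congr rfl
    intro k _
    obtain ⟨ha, hb⟩ := h1 k
    obtain ⟨hc, hd⟩ := h2 k
    show max (l1 (k + 1)) (l2 (k + 1)) + (min (l1 k) (l2 k) - mu k) + mu k
      = max (l1 (k + 1)) (l2 (k + 1)) + min (l1 k) (l2 k)
    omega
  have e4 : ∑ k ∈ Finset.range (N + 1), (fun k => max (l1 k) (l2 k)) k
      = ∑ k ∈ Finset.range N, max (l1 (k + 1)) (l2 (k + 1)) + max (l1 0) (l2 0) :=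
    Finset.sum_range_succ' _ N
  have e5 : ∑ k ∈ Finset.range (N + 1), (fun k => min (l1 k) (l2 k)) k
      = ∑ k ∈ Finset.range N, min (l1 k) (l2 k) + min (l1 N) (l2 N) :=
    Finset.sum_range_succ _ N
  have e6 : ∑ k ∈ Finset.range (N + 1), (fun k => max (l1 k) (l2 k)) k
      + ∑ k ∈ Finset.range (N + 1), (fun k => min (l1 k) (l2 k)) k
      = ∑ k ∈ Finset.range (N + 1), l1 k + ∑ k ∈ Finset.range (N + 1), l2 k := by
    rw [← Finset.sum_add_distrib, ← Finset.sum_add_distrib]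
    apply Finset.sum_congr rfl
    intro k _
    show max (l1 k) (l2 k) + min (l1 k) (l2 k) = l1 k + l2 k
    omega
  have e7 : nu 0 = max (l1 0) (l2 0) + c := rfl
  have e8 : ∑ k ∈ Finset.range N, (fun k => max (l1 (k + 1)) (l2 (k + 1)) + min (l1 k) (l2 k)) k
      = ∑ k ∈ Finset.range N, max (l1 (k + 1)) (l2 (k + 1))
        + ∑ k ∈ Finset.range N, min (l1 k) (l2 k) := Finset.sum_add_distrib
  have hminN : min (l1 N) (l2 N) = 0 := by omega
  omega

section SizeB

variable {m : ℕ → ℕ → ℕ} {B : ℕ}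

/-- size of a partition in the diagram -/
def szB (B : ℕ) (f : ℕ → ℕ) : ℕ := ∑ k ∈ Finset.range (2 * B + 1), f k

lemma gro_size (hm : ∀ x y, B ≤ x ∨ B ≤ y → m x y = 0) (x y : ℕ) :
    szB B (gro m B x y) + szB B (gro m B (x + 1) (y + 1))
      = szB B (gro m B (x + 1) y) + szB B (gro m B x (y + 1)) + m x y := by
  unfold szB
  rw [gro_rec hm x y]
  exact locF_size ((gro_HS hm (x + 1) y).2) ((gro_HS hm x (y + 1)).1)
    (gro_parts_vanish hm _ _ _ (by omega)) (gro_parts_vanish hm _ _ _ (by omega))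
    (gro_parts_vanish hm _ _ _ (by omega))

/-- rectangle sums of the matrix -/
def Rsum (m : ℕ → ℕ → ℕ) (B x y : ℕ) : ℕ :=
  ∑ p ∈ Finset.range B ×ˢ Finset.range B, (if x ≤ p.1 ∧ y ≤ p.2 then m p.1 p.2 else 0)

lemma Rsum_rel (hm : ∀ x y, B ≤ x ∨ B ≤ y → m x y = 0) (x y : ℕ) :
    Rsum m B x y + Rsum m B (x + 1) (y + 1) = Rsum m B (x + 1) y + Rsum m B x (y + 1) + m x y := by
  unfold Rsum
  rw [← Finset.sum_add_distrib, ← Finset.sum_add_distrib]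
  have key : ∀ p ∈ Finset.range B ×ˢ Finset.range B,
      ((if x ≤ p.1 ∧ y ≤ p.2 then m p.1 p.2 else 0)
        + (if x + 1 ≤ p.1 ∧ y + 1 ≤ p.2 then m p.1 p.2 else 0))
      = ((if x + 1 ≤ p.1 ∧ y ≤ p.2 then m p.1 p.2 else 0)
        + (if x ≤ p.1 ∧ y + 1 ≤ p.2 then m p.1 p.2 else 0))
        + (if p = (x, y) then m p.1 p.2 else 0) := by
    intro p _
    obtain ⟨a, b⟩ := p
    simp only [Prod.mk.injEq]
    split_ifs <;> omega
  rw [Finset.sum_congr rfl key, Finset.sum_add_distrib, Finset.sum_ite_eq']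
  by_cases hxy : (x, y) ∈ Finset.range B ×ˢ Finset.range B
  · rw [if_pos hxy]
  · rw [if_neg hxy]
    have : m x y = 0 := by
      apply hm
      simp only [Finset.mem_product, Finset.mem_range] at hxy
      omega
    omega

lemma gro_size_eq_R (hm : ∀ x y, B ≤ x ∨ B ≤ y → m x y = 0) :
    ∀ x y, szB B (gro m B x y) = Rsum m B x y := by
  apply se_ind (2 * B)
  · intro x y h
    have h1 : szB B (gro m B x y) = 0 := by
      unfold szB
      rw [gro_vanish hm x y (by omega)]
      simp
    have h2 : Rsum m B x y = 0 := by
      unfold Rsum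
      apply Finset.sum_eq_zero
      intro p hp
      simp only [Finset.mem_product, Finset.mem_range] at hp
      split_ifs with hc
      · omega
      · rfl
    rw [h1, h2]
  · intro x y _ ih1 ih2 ih3
    have hs := gro_size hm x y
    have hr := Rsum_rel hm x y
    omega

end SizeB


/-! ### statistics of `ppOf` -/

lemma sum_ite_le_range {N c v : ℕ} (h : c < N) :
    ∑ d ∈ Finset.range N, (if d ≤ c then v else 0) = (c + 1) * v := by
  rw [← Finset.sum_filter]
  have : (Finset.range N).filter (fun d => d ≤ c) = Finset.range (c + 1) := by
    ext d
    simp only [Finset.mem_filter, Finset.mem_range]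
    omega
  rw [this, Finset.sum_const, Finset.card_range, smul_eq_mul]

lemma sum_ite_le_Ico {N c v : ℕ} (h : c < N) :
    ∑ d ∈ Finset.Ico 1 N, (if d ≤ c then v else 0) = c * v := by
  rw [← Finset.sum_filter]
  have : (Finset.Ico 1 N).filter (fun d => d ≤ c) = Finset.Ico 1 (c + 1) := by
    ext d
    simp only [Finset.mem_filter, Finset.mem_Ico]
    omega
  rw [this, Finset.sum_const, Nat.card_Ico, smul_eq_mul]
  congr 1

section StatB

variable {m : ℕ → ℕ → ℕ} {B : ℕ}

lemma trace_ppOf (hm : ∀ x y, B ≤ x ∨ B ≤ y → m x y = 0) :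
    (ppOf m B hm).trace = ∑ p ∈ Finset.range B ×ˢ Finset.range B, m p.1 p.2 := by
  show (∑ᶠ i : ℕ, entB m B i i) = _
  have hsupp : Function.support (fun i => entB m B i i) ⊆ ↑(Finset.range (2 * B + 1)) := by
    intro i hi
    simp only [Function.mem_support] at hi
    simp only [Finset.coe_range, Set.mem_Iio]
    by_contra hc
    exact hi (entB_bound hm i i (by omega))
  rw [finsum_eq_sum_of_support_subset _ hsupp]
  have hcong : ∀ i ∈ Finset.range (2 * B + 1), entB m B i i = gro m B 0 0 i := by
    intro i _
    unfold entB
    rw [if_pos (le_refl i), Nat.sub_self]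
  rw [Finset.sum_congr rfl hcong]
  have h5 : (∑ i ∈ Finset.range (2 * B + 1), gro m B 0 0 i) = Rsum m B 0 0 :=
    gro_size_eq_R hm 0 0
  rw [h5]
  unfold Rsum
  apply Finset.sum_congr rfl
  intro p _
  rw [if_pos ⟨Nat.zero_le _, Nat.zero_le _⟩]

lemma vol_ppOf (hm : ∀ x y, B ≤ x ∨ B ≤ y → m x y = 0) :
    (ppOf m B hm).vol
      = ∑ p ∈ Finset.range B ×ˢ Finset.range B, m p.1 p.2 * (p.1 + p.2 + 1) := by
  classical
  show (∑ᶠ p : ℕ × ℕ, entB m B p.1 p.2) = _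
  set grid2 := Finset.range (2 * B) ×ˢ Finset.range (2 * B) with hgrid2
  have hsupp : Function.support (fun p : ℕ × ℕ => entB m B p.1 p.2) ⊆ ↑grid2 := by
    intro p hp
    simp only [Function.mem_support] at hp
    simp only [hgrid2, Finset.coe_product, Set.mem_prod, Finset.coe_range, Set.mem_Iio]
    constructor
    · by_contra hc; exact hp (entB_bound hm p.1 p.2 (by omega))
    · by_contra hc; exact hp (entB_bound hm p.1 p.2 (by omega))
  rw [finsum_eq_sum_of_support_subset _ hsupp]
  rw [← Finset.sum_filter_add_sum_filter_not grid2 (fun p => p.1 ≤ p.2)]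
  -- upper part
  have hup : ∑ p ∈ grid2.filter (fun p => p.1 ≤ p.2), entB m B p.1 p.2
      = ∑ p ∈ Finset.range B ×ˢ Finset.range B, (p.2 + 1) * m p.1 p.2 := by
    have h1 : ∑ p ∈ grid2.filter (fun p => p.1 ≤ p.2), entB m B p.1 p.2
        = ∑ q ∈ grid2.filter (fun q => q.1 + q.2 < 2 * B), gro m B 0 q.1 q.2 := by
      apply Finset.sum_nbij' (fun p => (p.2 - p.1, p.1)) (fun q => (q.2, q.2 + q.1))
      · intro p hp
        simp only [hgrid2, Finset.mem_filter, Finset.mem_product, Finset.mem_range] at hp ⊢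
        omega
      · intro q hq
        simp only [hgrid2, Finset.mem_filter, Finset.mem_product, Finset.mem_range] at hq ⊢
        omega
      · intro p hp
        simp only [hgrid2, Finset.mem_filter, Finset.mem_product, Finset.mem_range] at hp
        ext <;> simp <;> omega
      · intro q hq
        simp only [hgrid2, Finset.mem_filter, Finset.mem_product, Finset.mem_range] at hq
        ext <;> simp <;> omega
      · intro p hp
        simp only [hgrid2, Finset.mem_filter, Finset.mem_product, Finset.mem_range] at hp
        unfold entB
        rw [if_pos hp.2]
    rw [h1]
    have h2 : ∑ q ∈ grid2.filter (fun q => q.1 + q.2 < 2 * B), gro m B 0 q.1 q.2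
        = ∑ q ∈ grid2, gro m B 0 q.1 q.2 := by
      apply Finset.sum_subset (Finset.filter_subset _ _)
      intro q _ hq2
      simp only [hgrid2, Finset.mem_filter, Finset.mem_product, Finset.mem_range] at hq2
      by_cases hq3 : q ∈ grid2
      · simp only [hgrid2, Finset.mem_product, Finset.mem_range] at hq3
        exact gro_parts_vanish hm 0 q.1 q.2 (by omega)
      · exact absurd ‹q ∈ grid2› hq3
    rw [h2, hgrid2, Finset.sum_product]
    have h3 : ∀ d ∈ Finset.range (2 * B), ∑ k ∈ Finset.range (2 * B), gro m B 0 d k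
        = Rsum m B 0 d := by
      intro d _
      rw [← gro_size_eq_R hm 0 d]
      unfold szB
      rw [Finset.sum_range_succ, gro_parts_vanish hm 0 d (2 * B) (by omega)]
      omega
    rw [Finset.sum_congr rfl h3]
    unfold Rsum
    rw [Finset.sum_comm]
    apply Finset.sum_congr rfl
    intro p hp
    simp only [Finset.mem_product, Finset.mem_range] at hp
    have h4 : ∀ d ∈ Finset.range (2 * B),
        (if 0 ≤ p.1 ∧ d ≤ p.2 then m p.1 p.2 else 0) = (if d ≤ p.2 then m p.1 p.2 else 0) := by
      intro d _
      by_cases hd : d ≤ p.2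
      · rw [if_pos ⟨Nat.zero_le _, hd⟩, if_pos hd]
      · rw [if_neg (fun hc => hd hc.2), if_neg hd]
    rw [Finset.sum_congr rfl h4, sum_ite_le_range (by omega)]
  -- lower part
  have hlo : ∑ p ∈ grid2.filter (fun p => ¬ p.1 ≤ p.2), entB m B p.1 p.2
      = ∑ p ∈ Finset.range B ×ˢ Finset.range B, p.1 * m p.1 p.2 := by
    have h1 : ∑ p ∈ grid2.filter (fun p => ¬ p.1 ≤ p.2), entB m B p.1 p.2
        = ∑ q ∈ grid2.filter (fun q => q.1 + q.2 < 2 * B ∧ 1 ≤ q.1), gro m B q.1 0 q.2 := by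
      apply Finset.sum_nbij' (fun p => (p.1 - p.2, p.2)) (fun q => (q.1 + q.2, q.2))
      · intro p hp
        simp only [hgrid2, Finset.mem_filter, Finset.mem_product, Finset.mem_range] at hp ⊢
        omega
      · intro q hq
        simp only [hgrid2, Finset.mem_filter, Finset.mem_product, Finset.mem_range] at hq ⊢
        omega
      · intro p hp
        simp only [hgrid2, Finset.mem_filter, Finset.mem_product, Finset.mem_range] at hp
        ext <;> simp <;> omega
      · intro q hq
        simp only [hgrid2, Finset.mem_filter, Finset.mem_product, Finset.mem_range] at hq
        ext <;> simp <;> omega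
      · intro p hp
        simp only [hgrid2, Finset.mem_filter, Finset.mem_product, Finset.mem_range] at hp
        unfold entB
        rw [if_neg hp.2]
    rw [h1]
    have h2 : ∑ q ∈ grid2.filter (fun q => q.1 + q.2 < 2 * B ∧ 1 ≤ q.1), gro m B q.1 0 q.2
        = ∑ q ∈ grid2.filter (fun q => 1 ≤ q.1), gro m B q.1 0 q.2 := by
      apply Finset.sum_subset
      · intro q hq
        simp only [Finset.mem_filter] at hq ⊢
        exact ⟨hq.1, hq.2.2⟩
      · intro q hq1 hq2
        simp only [hgrid2, Finset.mem_filter, Finset.mem_product, Finset.mem_range] at hq1 hq2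
        exact gro_parts_vanish hm q.1 0 q.2 (by omega)
    rw [h2]
    have h3 : grid2.filter (fun q : ℕ × ℕ => 1 ≤ q.1)
        = Finset.Ico 1 (2 * B) ×ˢ Finset.range (2 * B) := by
      ext q
      simp only [hgrid2, Finset.mem_filter, Finset.mem_product, Finset.mem_range,
        Finset.mem_Ico]
      omega
    rw [h3, Finset.sum_product]
    have h4 : ∀ d ∈ Finset.Ico 1 (2 * B), ∑ k ∈ Finset.range (2 * B), gro m B d 0 k
        = Rsum m B d 0 := by
      intro d _
      rw [← gro_size_eq_R hm d 0]
      unfold szB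
      rw [Finset.sum_range_succ, gro_parts_vanish hm d 0 (2 * B) (by omega)]
      omega
    rw [Finset.sum_congr rfl h4]
    unfold Rsum
    rw [Finset.sum_comm]
    apply Finset.sum_congr rfl
    intro p hp
    simp only [Finset.mem_product, Finset.mem_range] at hp
    have h5 : ∀ d ∈ Finset.Ico 1 (2 * B),
        (if d ≤ p.1 ∧ 0 ≤ p.2 then m p.1 p.2 else 0) = (if d ≤ p.1 then m p.1 p.2 else 0) := by
      intro d _
      by_cases hd : d ≤ p.1
      · rw [if_pos ⟨hd, Nat.zero_le _⟩, if_pos hd]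
      · rw [if_neg (fun hc => hd hc.1), if_neg hd]
    rw [Finset.sum_congr rfl h5, sum_ite_le_Ico (by omega)]
  rw [hup, hlo, ← Finset.sum_add_distrib]
  apply Finset.sum_congr rfl
  intro p _
  ring

end StatB


/-! ### the backward construction: growth diagram of a plane partition -/

def rhoHat (π : PlanePartition) : ℕ → ℕ → ℕ → ℕ :=
  Nat.rec (fun y k => π.entry k (k + y))
    (fun x prev => Nat.rec (fun k => π.entry (k + (x + 1)) k)
      (fun y ih => locG ih (prev (y + 1)) (prev y)))

lemma rhoHat_up (π : PlanePartition) (y : ℕ) : rhoHat π 0 y = fun k => π.entry k (k + y) := rfl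

lemma rhoHat_lo (π : PlanePartition) (x : ℕ) :
    rhoHat π (x + 1) 0 = fun k => π.entry (k + (x + 1)) k := rfl

lemma rhoHat_succ (π : PlanePartition) (x y : ℕ) :
    rhoHat π (x + 1) (y + 1)
      = locG (rhoHat π (x + 1) y) (rhoHat π x (y + 1)) (rhoHat π x y) := rfl

lemma up_strip (π : PlanePartition) (y : ℕ) : HS (rhoHat π 0 (y + 1)) (rhoHat π 0 y) := by
  intro k
  rw [rhoHat_up, rhoHat_up]
  constructor
  · show π.entry k (k + (y + 1)) ≤ π.entry k (k + y)
    have h : k + (y + 1) = (k + y) + 1 := by omega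
    rw [h]
    exact π.row_decr k (k + y)
  · show π.entry (k + 1) ((k + 1) + y) ≤ π.entry k (k + (y + 1))
    have h : (k + 1) + y = k + (y + 1) := by omega
    rw [h]
    exact π.col_decr k (k + (y + 1))

lemma lo_strip (π : PlanePartition) (x : ℕ) : HS (rhoHat π (x + 1) 0) (rhoHat π x 0) := by
  intro k
  cases x with
  | zero =>
    rw [rhoHat_lo, rhoHat_up]
    constructor
    · show π.entry (k + 1) k ≤ π.entry k (k + 0)
      have h : k + 0 = k := by omega
      rw [h]
      exact π.col_decr k k
    · show π.entry (k + 1) ((k + 1) + 0) ≤ π.entry (k + 1) k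
      have h : (k + 1) + 0 = k + 1 := by omega
      rw [h]
      exact π.row_decr (k + 1) k
  | succ x =>
    rw [rhoHat_lo, rhoHat_lo]
    constructor
    · show π.entry (k + (x + 2)) k ≤ π.entry (k + (x + 1)) k
      have h : k + (x + 2) = (k + (x + 1)) + 1 := by omega
      rw [h]
      exact π.col_decr (k + (x + 1)) k
    · show π.entry ((k + 1) + (x + 1)) (k + 1) ≤ π.entry (k + (x + 2)) k
      have h : (k + 1) + (x + 1) = k + (x + 2) := by omega
      rw [h]
      exact π.row_decr (k + (x + 2)) k

lemma rhoHat_HS (π : PlanePartition) :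
    ∀ x y, HS (rhoHat π (x + 1) y) (rhoHat π x y) ∧ HS (rhoHat π x (y + 1)) (rhoHat π x y) := by
  intro x
  induction x with
  | zero =>
    intro y
    induction y with
    | zero => exact ⟨lo_strip π 0, up_strip π 0⟩
    | succ y ihy =>
      constructor
      · rw [rhoHat_succ]
        exact locG_HS2 ihy.1 ihy.2
      · exact up_strip π (y + 1)
  | succ x ihx =>
    intro y
    induction y with
    | zero =>
      constructor
      · exact lo_strip π (x + 1)
      · rw [rhoHat_succ]
        exact locG_HS1 (ihx 0).1 (ihx 0).2
    | succ y ihy =>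
      constructor
      · rw [rhoHat_succ π (x + 1) y]
        exact locG_HS2 ihy.1 ihy.2
      · rw [rhoHat_succ π x (y + 1)]
        exact locG_HS1 (ihx (y + 1)).1 (ihx (y + 1)).2

/-- the matrix of a plane partition under the trace bijection -/
def mB (π : PlanePartition) : ℕ → ℕ → ℕ := fun x y =>
  rhoHat π x y 0 - max (rhoHat π (x + 1) y 0) (rhoHat π x (y + 1) 0)

lemma rhoHat_rec (π : PlanePartition) (x y : ℕ) :
    rhoHat π x y = locF (rhoHat π (x + 1) (y + 1)) (rhoHat π (x + 1) y) (rhoHat π x (y + 1))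
      (mB π x y) := by
  have h := rhoHat_HS π x y
  rw [rhoHat_succ]
  exact (locF_locG h.1 h.2).symm

lemma rhoHat_vanish (π : PlanePartition) {B : ℕ} (hB0 : 0 < B)
    (hB : ∀ i j, B ≤ i ∨ B ≤ j → π.entry i j = 0) :
    ∀ x y, (B ≤ x ∨ B ≤ y) → rhoHat π x y = fun _ => 0 := by
  have hup : ∀ y, B ≤ y → rhoHat π 0 y = fun _ => 0 := by
    intro y hy
    rw [rhoHat_up]
    funext k
    exact hB k (k + y) (Or.inr (by omega))
  have hlo : ∀ x, B ≤ x → rhoHat π x 0 = fun _ => 0 := by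
    intro x hx
    match x, hx with
    | 0, hx => exact absurd hx (by omega)
    | x + 1, hx =>
      rw [rhoHat_lo]
      funext k
      exact hB (k + (x + 1)) k (Or.inl (by omega))
  have hrow : ∀ x, B ≤ x → ∀ y, rhoHat π x y = fun _ => 0 := by
    intro x hx y
    induction y with
    | zero => exact hlo x hx
    | succ y ihy =>
      funext k
      have h1 := ((rhoHat_HS π x y).2 k).1
      rw [ihy] at h1
      exact Nat.le_zero.mp h1
  have hcol : ∀ y, B ≤ y → ∀ x, rhoHat π x y = fun _ => 0 := by
    intro y hy x
    induction x with
    | zero => exact hup y hy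
    | succ x ihx =>
      funext k
      have h1 := ((rhoHat_HS π x y).1 k).1
      rw [ihx] at h1
      exact Nat.le_zero.mp h1
  intro x y h
  rcases h with h | h
  · exact hrow x h y
  · exact hcol y h x

lemma mB_vanish (π : PlanePartition) {B : ℕ} (hB0 : 0 < B)
    (hB : ∀ i j, B ≤ i ∨ B ≤ j → π.entry i j = 0) :
    ∀ x y, (B ≤ x ∨ B ≤ y) → mB π x y = 0 := by
  intro x y h
  unfold mB
  rw [rhoHat_vanish π hB0 hB x y h]
  show 0 - max (rhoHat π (x + 1) y 0) (rhoHat π x (y + 1) 0) = 0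
  omega

/-- the forward growth diagram of `mB π` recovers `rhoHat π`. -/
lemma gro_eq_rhoHat (π : PlanePartition) {B' B : ℕ} (hB0 : 0 < B)
    (hB : ∀ i j, B ≤ i ∨ B ≤ j → π.entry i j = 0)
    (hm' : ∀ x y, B' ≤ x ∨ B' ≤ y → mB π x y = 0) :
    ∀ x y, gro (mB π) B' x y = rhoHat π x y := by
  apply se_ind (2 * (B' + B))
  · intro x y h
    rw [gro_vanish hm' x y (by omega), rhoHat_vanish π hB0 hB x y (by omega)]
  · intro x y _ ih1 ih2 ih3
    rw [gro_rec hm' x y, rhoHat_rec π x y, ih1, ih2, ih3]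

/-- forward-then-extract recovers the plane partition. -/
lemma ppOf_mB (π : PlanePartition) {B' B : ℕ} (hB0 : 0 < B)
    (hB : ∀ i j, B ≤ i ∨ B ≤ j → π.entry i j = 0)
    (hm' : ∀ x y, B' ≤ x ∨ B' ≤ y → mB π x y = 0) :
    ppOf (mB π) B' hm' = π := by
  ext i j
  show entB (mB π) B' i j = π.entry i j
  unfold entB
  by_cases h : i ≤ j
  · rw [if_pos h, gro_eq_rhoHat π hB0 hB hm', rhoHat_up]
    show π.entry i (i + (j - i)) = π.entry i j
    have he : i + (j - i) = j := by omega
    rw [he]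
  · rw [if_neg h, gro_eq_rhoHat π hB0 hB hm']
    have h2 : i - j = (i - j - 1) + 1 := by omega
    rw [h2, rhoHat_lo]
    show π.entry (j + (i - j - 1 + 1)) j = π.entry i j
    have he : j + (i - j - 1 + 1) = i := by omega
    rw [he]

/-- extract-then-backward recovers the growth diagram. -/
lemma rhoHat_ppOf {m : ℕ → ℕ → ℕ} {B : ℕ} (hm : ∀ x y, B ≤ x ∨ B ≤ y → m x y = 0) :
    ∀ x y, rhoHat (ppOf m B hm) x y = gro m B x y := by
  intro x
  induction x with
  | zero =>
    intro y
    rw [rhoHat_up]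
    funext k
    show entB m B k (k + y) = gro m B 0 y k
    unfold entB
    rw [if_pos (by omega : k ≤ k + y)]
    have he : k + y - k = y := by omega
    rw [he]
  | succ x ihx =>
    intro y
    induction y with
    | zero =>
      rw [rhoHat_lo]
      funext k
      show entB m B (k + (x + 1)) k = gro m B (x + 1) 0 k
      unfold entB
      rw [if_neg (by omega : ¬ (k + (x + 1) ≤ k))]
      have he : k + (x + 1) - k = x + 1 := by omega
      rw [he]
    | succ y ihy =>
      rw [rhoHat_succ, ihy, ihx (y + 1), ihx y]
      have hrec := gro_rec hm x y
      have h1 : HS (gro m B (x + 1) (y + 1)) (gro m B (x + 1) y) := (gro_HS hm (x + 1) y).2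
      have h2 : HS (gro m B (x + 1) (y + 1)) (gro m B x (y + 1)) := (gro_HS hm x (y + 1)).1
      rw [hrec]
      exact locG_locF h1 h2

lemma mB_ppOf {m : ℕ → ℕ → ℕ} {B : ℕ} (hm : ∀ x y, B ≤ x ∨ B ≤ y → m x y = 0) (x y : ℕ) :
    mB (ppOf m B hm) x y = m x y := by
  unfold mB
  rw [rhoHat_ppOf hm, rhoHat_ppOf hm, rhoHat_ppOf hm]
  have h := gro_rec hm x y
  have h0 : gro m B x y 0 = max (gro m B (x + 1) y 0) (gro m B x (y + 1) 0) + m x y := by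
    rw [h]
    rfl
  omega


/-! ### part B packaged -/

lemma mB_finite_support (π : PlanePartition) :
    (Function.support fun p : ℕ × ℕ => mB π p.1 p.2).Finite := by
  obtain ⟨B, hB0, hBsupp, _⟩ := exists_bound π
  apply Set.Finite.subset (Finset.finite_toSet (Finset.range B ×ˢ Finset.range B))
  intro p hp
  simp only [Function.mem_support] at hp
  simp only [Finset.coe_product, Set.mem_prod, Finset.mem_coe, Finset.mem_range]
  constructor
  · by_contra h; exact hp (mB_vanish π hB0 hBsupp p.1 p.2 (Or.inl (by omega)))
  · by_contra h; exact hp (mB_vanish π hB0 hBsupp p.1 p.2 (Or.inr (by omega)))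

noncomputable def PhiB (π : PlanePartition) : (ℕ × ℕ) →₀ ℕ :=
  Finsupp.ofSupportFinite (fun p => mB π p.1 p.2) (mB_finite_support π)

noncomputable def PsiB (m : (ℕ × ℕ) →₀ ℕ) : PlanePartition :=
  ppOf (fun x y => m (x, y)) (mbound m) (fun x y h => mbound_spec m x y h)

lemma PsiB_PhiB (π : PlanePartition) : PsiB (PhiB π) = π := by
  obtain ⟨B, hB0, hBsupp, _⟩ := exists_bound π
  exact ppOf_mB π hB0 hBsupp _

lemma PhiB_PsiB (m : (ℕ × ℕ) →₀ ℕ) : PhiB (PsiB m) = m := by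
  ext p
  obtain ⟨x, y⟩ := p
  show mB (ppOf _ _ _) x y = m (x, y)
  exact mB_ppOf _ x y

/-- The trace equivalence (part B). -/
noncomputable def equivB : PlanePartition ≃ ((ℕ × ℕ) →₀ ℕ) where
  toFun := PhiB
  invFun := PsiB
  left_inv := PsiB_PhiB
  right_inv := PhiB_PsiB

lemma trace_PsiB (m : (ℕ × ℕ) →₀ ℕ) : (PsiB m).trace = msum m := by
  unfold PsiB
  rw [trace_ppOf]
  have hsub : m.support ⊆ Finset.range (mbound m) ×ˢ Finset.range (mbound m) := by
    intro p hp
    rw [Finsupp.mem_support_iff] at hp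
    simp only [Finset.mem_product, Finset.mem_range]
    constructor
    · by_contra h; exact hp (mbound_spec m p.1 p.2 (Or.inl (by omega)))
    · by_contra h; exact hp (mbound_spec m p.1 p.2 (Or.inr (by omega)))
  unfold msum
  rw [Finsupp.sum]
  exact (Finset.sum_subset hsub (fun p _ hp => Finsupp.notMem_support_iff.mp hp)).symm

lemma vol_PsiB (m : (ℕ × ℕ) →₀ ℕ) : (PsiB m).vol = wsum m := by
  unfold PsiB
  rw [vol_ppOf]
  have hsub : m.support ⊆ Finset.range (mbound m) ×ˢ Finset.range (mbound m) := by
    intro p hp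
    rw [Finsupp.mem_support_iff] at hp
    simp only [Finset.mem_product, Finset.mem_range]
    constructor
    · by_contra h; exact hp (mbound_spec m p.1 p.2 (Or.inl (by omega)))
    · by_contra h; exact hp (mbound_spec m p.1 p.2 (Or.inr (by omega)))
  unfold wsum
  rw [Finsupp.sum]
  refine (Finset.sum_subset hsub ?_).symm
  intro p _ hp
  rw [Finsupp.notMem_support_iff.mp hp, zero_mul]

lemma trace_eq_msum (π : PlanePartition) : π.trace = msum (PhiB π) := by
  have h := trace_PsiB (PhiB π)
  rw [PsiB_PhiB] at h
  exact h

lemma vol_eq_wsum (π : PlanePartition) : π.vol = wsum (PhiB π) := by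
  have h := vol_PsiB (PhiB π)
  rw [PsiB_PhiB] at h
  exact h

end PPwork

/-- The pair statistics `(des, |·|_{uh})` and `(tr, |·|)` are
equidistributed over all plane partitions (coefficient-wise form of
`Σ_π t^{des π} q^{|π|_{uh}} = Π_{k≥1}(1 - t q^k)^{-k} = Σ_π t^{tr π} q^{|π|}`,
the middle product being Stanley's known trace generating function). -/
theorem des_uphook_equidistributed_with_trace_volume (a b : ℕ) :
    Nat.card {π : PlanePartition // π.des = a ∧ π.uhvol = b} =
    Nat.card {π : PlanePartition // π.trace = a ∧ π.vol = b} := by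
  apply Nat.card_congr
  have e1 : {π : PlanePartition // π.des = a ∧ π.uhvol = b}
      ≃ {m : (ℕ × ℕ) →₀ ℕ // PPwork.msum m = a ∧ PPwork.wsum m = b} :=
    PPwork.equivA.subtypeEquiv (fun π => by
      rw [PPwork.des_eq_msum π, PPwork.uhvol_eq_wsum π]
      exact Iff.rfl)
  have e2 : {π : PlanePartition // π.trace = a ∧ π.vol = b}
      ≃ {m : (ℕ × ℕ) →₀ ℕ // PPwork.msum m = a ∧ PPwork.wsum m = b} :=
    PPwork.equivB.subtypeEquiv (fun π => by
      rw [PPwork.trace_eq_msum π, PPwork.vol_eq_wsum π]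
      exact Iff.rfl)
  exact e1.trans e2.symm
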